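/- Let P and Q be groups and let G = P ∗ Q be their free product, with P and Q regarded as subgroups of G via the canonical embeddings. Let P₀ ≤ P and Q₀ ≤ Q be subgroups, let a ∈ P and b ∈ Q, and set g = ab ∈ G. Then the homomorphism from the free product P₀ ∗ Q₀ to G which restricts on P₀ to the inclusion P₀ ↪ G and on Q₀ to the map x ↦ g x g⁻¹ is injective. Consequently, the subgroup of G generated by P₀ ∪ gQ₀g⁻¹ is canonically isomorphic to P₀ ∗ Q₀. -/

import Mathlib

section Aux
open Monoid Function

section CoprodIMap

variable {ι : Type*} {M N : ι → Type*} [∀ i, Group (M i)] [∀ i, Group (N i)]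

theorem coprodI_map_injective (f : ∀ i, M i →* N i) (hf : ∀ i, Function.Injective (f i)) :
    Function.Injective (CoprodI.lift fun i => (CoprodI.of (M := N)).comp (f i)) := by
  classical
  set Φ := CoprodI.lift fun i => (CoprodI.of (M := N)).comp (f i) with hΦ
  rw [injective_iff_map_eq_one]
  intro x hx
  set w : CoprodI.Word M := CoprodI.Word.equiv x with hw
  -- mapped word
  refine ?_
  have hne : ∀ l ∈ w.toList.map (fun l : Σ i, M i => (⟨l.1, f l.1 l.2⟩ : Σ i, N i)),
      l.2 ≠ 1 := by
    intro l hl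
    simp only [List.mem_map] at hl
    obtain ⟨l', hl', rfl⟩ := hl
    intro h1
    exact w.ne_one l' hl' ((injective_iff_map_eq_one (f l'.1)).mp (hf l'.1) _ h1)
  have hchain : (w.toList.map (fun l : Σ i, M i => (⟨l.1, f l.1 l.2⟩ : Σ i, N i))).IsChain
      (fun a b => a.1 ≠ b.1) := by
    rw [List.isChain_map]
    exact w.chain_ne
  set w' : CoprodI.Word N :=
    ⟨w.toList.map (fun l => ⟨l.1, f l.1 l.2⟩), hne, hchain⟩ with hw'
  have hprod : Φ w.prod = w'.prod := by
    rw [CoprodI.Word.prod, CoprodI.Word.prod, map_list_prod]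
    simp [hw', List.map_map, Function.comp_def, hΦ]
  have hxw : w.prod = x := CoprodI.Word.equiv.symm_apply_apply x
  rw [hxw, hx] at hprod
  have : w' = CoprodI.Word.empty := by
    have h1 : CoprodI.Word.equiv (CoprodI.Word.prod w') = w' :=
      CoprodI.Word.equiv.apply_symm_apply w'
    rw [← hprod] at h1
    rw [← h1]
    show CoprodI.Word.equiv (1 : CoprodI N) = _
    show (1 : CoprodI N) • CoprodI.Word.empty = _
    rw [one_smul]
  have hnil : w.toList = [] := by
    have := congrArg CoprodI.Word.toList this
    simpa [hw', CoprodI.Word.empty] using this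
  have : w = CoprodI.Word.empty := CoprodI.Word.ext hnil
  rw [← hxw, this, CoprodI.Word.prod_empty]

end CoprodIMap

section CoprodMap

universe u v

variable {G G' : Type u} {H H' : Type v} [Group G] [Group H] [Group G'] [Group H']

/-- Bool-indexed family for the binary coproduct. -/
abbrev coprodFam (G : Type u) (H : Type v) : Bool → Type (max u v) :=
  fun b => bif b then ULift.{v} G else ULift.{u} H

instance coprodFamGroup (G : Type u) (H : Type v) [Group G] [Group H] :
    ∀ b, Group (coprodFam G H b)
  | true => inferInstanceAs (Group (ULift G))
  | false => inferInstanceAs (Group (ULift H))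

/-- `G →* ULift G` as a monoid hom. -/
def upHom (G : Type u) [Group G] : G →* ULift.{v} G :=
  (MulEquiv.ulift.symm : G ≃* ULift G).toMonoidHom

theorem upHom_injective (G : Type u) [Group G] :
    Function.Injective (upHom.{u, v} G) :=
  (MulEquiv.ulift.symm : G ≃* ULift G).injective

/-- The canonical hom `Coprod G H →* CoprodI (coprodFam G H)`. -/
def toCoprodI : Coprod G H →* CoprodI (coprodFam G H) :=
  Coprod.lift ((CoprodI.of (i := true)).comp (upHom G))
    ((CoprodI.of (i := false)).comp (upHom H))

/-- A left inverse of `toCoprodI`. -/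
def ofCoprodI' : CoprodI (coprodFam G H) →* Coprod G H :=
  CoprodI.lift fun b => match b with
    | true => (Coprod.inl : G →* Coprod G H).comp
        ((MulEquiv.ulift : ULift G ≃* G).toMonoidHom)
    | false => (Coprod.inr : H →* Coprod G H).comp
        ((MulEquiv.ulift : ULift H ≃* H).toMonoidHom)

theorem toCoprodI_injective : Function.Injective (toCoprodI : Coprod G H →* _) := by
  have h : (ofCoprodI' (G := G) (H := H)).comp toCoprodI = MonoidHom.id _ := by
    apply Coprod.hom_ext <;> ext x <;>
      simp only [toCoprodI, ofCoprodI', upHom, MonoidHom.comp_apply,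
        Coprod.lift_apply_inl, Coprod.lift_apply_inr, MulEquiv.coe_toMonoidHom,
        MonoidHom.id_apply] <;> rw [CoprodI.lift_of] <;> simp
  intro x y hxy
  have := congrArg (ofCoprodI' (G := G) (H := H)) hxy
  calc x = (ofCoprodI'.comp toCoprodI) x := by rw [h]; rfl
    _ = (ofCoprodI'.comp toCoprodI) y := this
    _ = y := by rw [h]; rfl

/-- The family version of a pair of maps. -/
def coprodFamMap (f : G →* G') (h : H →* H') :
    ∀ b, coprodFam G H b →* coprodFam G' H' b
  | true => (upHom G').comp (f.comp (MulEquiv.ulift : ULift G ≃* G).toMonoidHom)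
  | false => (upHom H').comp (h.comp (MulEquiv.ulift : ULift H ≃* H).toMonoidHom)

theorem coprod_map_injective (f : G →* G') (h : H →* H')
    (hf : Function.Injective f) (hh : Function.Injective h) :
    Function.Injective (Coprod.map f h) := by
  have key : (toCoprodI (G := G') (H := H')).comp (Coprod.map f h) =
      (CoprodI.lift fun b => (CoprodI.of (M := coprodFam G' H')).comp
        (coprodFamMap f h b)).comp toCoprodI := by
    apply Coprod.hom_ext <;> ext x <;>
      simp only [toCoprodI, coprodFamMap, upHom, MonoidHom.comp_apply,
        Coprod.lift_apply_inl, Coprod.lift_apply_inr, MulEquiv.coe_toMonoidHom,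
        Coprod.map_apply_inl, Coprod.map_apply_inr] <;> rw [CoprodI.lift_of] <;> simp
  have hpsi : Function.Injective (CoprodI.lift fun b =>
      (CoprodI.of (M := coprodFam G' H')).comp (coprodFamMap f h b)) := by
    apply coprodI_map_injective
    intro b
    cases b
    · exact (upHom_injective H').comp (hh.comp (MulEquiv.ulift : ULift H ≃* H).injective)
    · exact (upHom_injective G').comp (hf.comp (MulEquiv.ulift : ULift G ≃* G).injective)
  have hcomp : Function.Injective
      ((toCoprodI (G := G') (H := H')).comp (Coprod.map f h)) := by
    rw [key]
    exact hpsi.comp toCoprodI_injective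
  intro x y hxy
  exact hcomp (by simp only [MonoidHom.comp_apply, hxy])

end CoprodMap

end Aux


open Monoid

/-- Let `P`, `Q` be groups, `G = P ∗ Q` their free product, `P₀ ≤ P`, `Q₀ ≤ Q` subgroups,
`a ∈ P`, `b ∈ Q` and `g = ab ∈ G`. The homomorphism `P₀ ∗ Q₀ → G` which restricts on `P₀`
to the inclusion `P₀ ↪ G` and on `Q₀` to `x ↦ g x g⁻¹`. -/
noncomputable def inducedHom {P Q : Type*} [Group P] [Group Q]
    (P₀ : Subgroup P) (Q₀ : Subgroup Q) (g : Coprod P Q) :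
    Coprod ↥P₀ ↥Q₀ →* Coprod P Q :=
  Coprod.lift (Coprod.inl.comp P₀.subtype)
    (((MulAut.conj g).toMonoidHom.comp Coprod.inr).comp Q₀.subtype)

/-- The homomorphism `P₀ ∗ Q₀ → G = P ∗ Q` which restricts on `P₀` to the inclusion and on
`Q₀` to conjugation by `g = ab` is injective; consequently the subgroup of `G` generated by
`P₀ ∪ g Q₀ g⁻¹` is canonically isomorphic to the free product `P₀ ∗ Q₀`. -/
theorem free_product_induced_splitting
    {P Q : Type*} [Group P] [Group Q]
    (P₀ : Subgroup P) (Q₀ : Subgroup Q) (a : P) (b : Q)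
    (g : Coprod P Q) (hg : g = Coprod.inl a * Coprod.inr b) :
    Function.Injective (inducedHom P₀ Q₀ g) ∧
      (inducedHom P₀ Q₀ g).range =
        Subgroup.closure
          ((Coprod.inl '' (P₀ : Set P)) ∪
            ((fun x => g * x * g⁻¹) '' (Coprod.inr '' (Q₀ : Set Q)))) := by
  constructor
  · -- injectivity
    subst hg
    set f : ↥P₀ →* P := (MulAut.conj a⁻¹).toMonoidHom.comp P₀.subtype with hf
    set h : ↥Q₀ →* Q := (MulAut.conj b).toMonoidHom.comp Q₀.subtype with hh
    have hfac : inducedHom P₀ Q₀ (Coprod.inl a * Coprod.inr b) =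
        (MulAut.conj (Coprod.inl a : Coprod P Q)).toMonoidHom.comp (Coprod.map f h) := by
      apply Coprod.hom_ext
      · ext x
        simp only [inducedHom, MonoidHom.comp_apply, Coprod.lift_apply_inl,
          Coprod.map_apply_inl, MulEquiv.coe_toMonoidHom, Subgroup.coe_subtype, hf]
        rw [MulAut.conj_apply, MulAut.conj_apply,
          ← map_inv (Coprod.inl : P →* Coprod P Q), ← map_mul, ← map_mul]
        congr 1
        group
      · ext x
        simp only [inducedHom, MonoidHom.comp_apply, Coprod.lift_apply_inr,
          Coprod.map_apply_inr, MulEquiv.coe_toMonoidHom, Subgroup.coe_subtype, hh]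
        rw [MulAut.conj_apply, MulAut.conj_apply, MulAut.conj_apply]
        simp [mul_assoc, mul_inv_rev]
    rw [hfac, MonoidHom.coe_comp]
    refine Function.Injective.comp (MulAut.conj (Coprod.inl a : Coprod P Q)).injective ?_
    apply coprod_map_injective
    · exact ((MulAut.conj a⁻¹).injective).comp P₀.subtype_injective
    · exact ((MulAut.conj b).injective).comp Q₀.subtype_injective
  · -- range
    have hfun : (fun x : Coprod P Q => g * x * g⁻¹) = ⇑((MulAut.conj g).toMonoidHom) := by
      ext x
      simp [MulAut.conj_apply]
    rw [inducedHom, Coprod.range_lift, Subgroup.closure_union]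
    congr 1
    · rw [MonoidHom.range_comp, Subgroup.range_subtype, ← Subgroup.coe_map,
        Subgroup.closure_eq]
    · rw [MonoidHom.range_comp, Subgroup.range_subtype, ← Subgroup.map_map, hfun,
        ← Subgroup.coe_map, ← Subgroup.coe_map, Subgroup.closure_eq]
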